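/- If n is a perfect number, then KL(n) ≥ (2·φ(n) − n)²/(2n). -/

import Mathlib

/-- `KL n = ∑_{d ∣ n} d · log (d / (2 φ(d)))`. -/
noncomputable def KL (n : ℕ) : ℝ :=
  ∑ d ∈ n.divisors, (d : ℝ) * Real.log ((d : ℝ) / (2 * (Nat.totient d : ℝ)))

lemma one_sub_inv_le_log' {x : ℝ} (hx : 0 < x) : 1 - x⁻¹ ≤ Real.log x := by
  have h := Real.log_le_sub_one_of_pos (inv_pos.mpr hx)
  rw [Real.log_inv] at h
  linarith

lemma log_sum_le' (s : Finset ℕ) (f g : ℕ → ℝ)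
    (hf : ∀ i ∈ s, 0 < f i) (hg : ∀ i ∈ s, 0 < g i) (hs : s.Nonempty) :
    (∑ i ∈ s, f i) * Real.log ((∑ i ∈ s, f i) / (∑ i ∈ s, g i)) ≤
      ∑ i ∈ s, f i * Real.log (f i / g i) := by
  set A := ∑ i ∈ s, f i with hA
  set B := ∑ i ∈ s, g i with hB
  have hApos : 0 < A := Finset.sum_pos hf hs
  have hBpos : 0 < B := Finset.sum_pos hg hs
  have key : ∀ i ∈ s,
      f i * Real.log (A / B) + f i - g i * (A / B) ≤ f i * Real.log (f i / g i) := by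
    intro i hi
    have hfi := hf i hi
    have hgi := hg i hi
    have hx : 0 < f i * B / (g i * A) := by positivity
    have h1 : 1 - (f i * B / (g i * A))⁻¹ ≤ Real.log (f i * B / (g i * A)) :=
      one_sub_inv_le_log' hx
    have h2 : Real.log (f i * B / (g i * A)) = Real.log (f i / g i) - Real.log (A / B) := by
      rw [Real.log_div (by positivity) (by positivity),
        Real.log_div (ne_of_gt hfi) (ne_of_gt hgi),
        Real.log_div (ne_of_gt hApos) (ne_of_gt hBpos),
        Real.log_mul (ne_of_gt hfi) (ne_of_gt hBpos),
        Real.log_mul (ne_of_gt hgi) (ne_of_gt hApos)]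
      ring
    rw [h2] at h1
    have h3 : f i * (1 - (f i * B / (g i * A))⁻¹) ≤
        f i * (Real.log (f i / g i) - Real.log (A / B)) :=
      mul_le_mul_of_nonneg_left h1 hfi.le
    have h4 : f i * (1 - (f i * B / (g i * A))⁻¹) = f i - g i * (A / B) := by
      field_simp
    nlinarith [h3]
  have hsum : ∑ i ∈ s, (f i * Real.log (A / B) + f i - g i * (A / B)) =
      A * Real.log (A / B) + A - B * (A / B) := by
    rw [Finset.sum_sub_distrib, Finset.sum_add_distrib, ← Finset.sum_mul, ← Finset.sum_mul]
  have hBA : B * (A / B) = A := by field_simp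
  calc A * Real.log (A / B) = ∑ i ∈ s, (f i * Real.log (A / B) + f i - g i * (A / B)) := by
        rw [hsum, hBA]; ring
    _ ≤ _ := Finset.sum_le_sum key

theorem KL_pinsker_bound_perfect (n : ℕ) (hn : 0 < n)
    (hperfect : ∑ d ∈ n.divisors, d = 2 * n) :
    KL n ≥ (2 * (Nat.totient n : ℝ) - n) ^ 2 / (2 * n) := by
  have h2 : 2 ≤ n := by
    by_contra h
    interval_cases n <;> simp_all
  have hmem : n ∈ n.divisors := Nat.mem_divisors_self n hn.ne'
  have h1s : (1 : ℕ) ∈ n.divisors.erase n :=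
    Finset.mem_erase.mpr ⟨by omega, Nat.one_mem_divisors.mpr hn.ne'⟩
  have hsne : (n.divisors.erase n).Nonempty := ⟨1, h1s⟩
  have hφpos : 0 < Nat.totient n := Nat.totient_pos.mpr hn
  have hφlt : Nat.totient n < n := Nat.totient_lt n h2
  have hapos : (0:ℝ) < (Nat.totient n : ℝ) := by exact_mod_cast hφpos
  have haltn : (Nat.totient n : ℝ) < (n:ℝ) := by exact_mod_cast hφlt
  have hnpos : (0:ℝ) < (n:ℝ) := by exact_mod_cast hn
  set a : ℝ := (Nat.totient n : ℝ)
  -- sums over the erased set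
  have hcastf : (∑ d ∈ n.divisors, (d:ℝ)) = 2 * (n:ℝ) := by
    have := congrArg (Nat.cast : ℕ → ℝ) hperfect
    push_cast at this
    exact this
  have hf := Finset.add_sum_erase n.divisors (fun d => (d:ℝ)) hmem
  have hsumf : ∑ d ∈ n.divisors.erase n, (d : ℝ) = (n : ℝ) := by
    linarith [hf, hcastf]
  have htot : ∑ d ∈ n.divisors, Nat.totient d = n := Nat.sum_totient n
  have hcastg : (∑ d ∈ n.divisors, (Nat.totient d : ℝ)) = (n : ℝ) := by
    have := congrArg (Nat.cast : ℕ → ℝ) htot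
    push_cast at this
    exact this
  have hg := Finset.add_sum_erase n.divisors (fun d => (Nat.totient d : ℝ)) hmem
  have hsumg : ∑ d ∈ n.divisors.erase n, (2 * (Nat.totient d : ℝ)) = 2 * (n : ℝ) - 2 * a := by
    rw [← Finset.mul_sum]
    have : ∑ d ∈ n.divisors.erase n, (Nat.totient d : ℝ) = (n:ℝ) - a := by
      linarith [hg, hcastg]
    rw [this]; ring
  -- split KL
  have hKL : KL n = (n:ℝ) * Real.log ((n:ℝ) / (2 * a)) +
      ∑ d ∈ n.divisors.erase n, (d : ℝ) * Real.log ((d : ℝ) / (2 * (Nat.totient d : ℝ))) := by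
    rw [KL, ← Finset.add_sum_erase n.divisors _ hmem]
  -- apply log-sum inequality to the erased set
  have hls := log_sum_le' (n.divisors.erase n) (fun d => (d:ℝ))
    (fun d => 2 * (Nat.totient d : ℝ))
    (fun i hi => by
      show (0:ℝ) < (i:ℝ)
      exact_mod_cast Nat.pos_of_mem_divisors (Finset.mem_of_mem_erase hi))
    (fun i hi => by
      show (0:ℝ) < 2 * (Nat.totient i : ℝ)
      have := Nat.totient_pos.mpr (Nat.pos_of_mem_divisors (Finset.mem_of_mem_erase hi))
      have h : (0:ℝ) < (Nat.totient i : ℝ) := by exact_mod_cast this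
      linarith)
    hsne
  rw [hsumf, hsumg] at hls
  have hbound : KL n ≥ (n:ℝ) * Real.log ((n:ℝ) / (2 * a)) +
      (n:ℝ) * Real.log ((n:ℝ) / (2 * (n:ℝ) - 2 * a)) := by
    rw [hKL]
    exact add_le_add_right hls _
  -- final analytic step
  have hna : (0:ℝ) < (n:ℝ) - a := by linarith
  have h2' : (2:ℝ) ≠ 0 := two_ne_zero
  have e1 : Real.log ((n:ℝ) / (2 * a)) =
      Real.log (n:ℝ) - (Real.log 2 + Real.log a) := by
    rw [Real.log_div (ne_of_gt hnpos) (by positivity), Real.log_mul h2' (ne_of_gt hapos)]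
  have e2 : Real.log ((n:ℝ) / (2 * (n:ℝ) - 2 * a)) =
      Real.log (n:ℝ) - (Real.log 2 + Real.log ((n:ℝ) - a)) := by
    rw [show 2 * (n:ℝ) - 2 * a = 2 * ((n:ℝ) - a) by ring,
      Real.log_div (ne_of_gt hnpos) (by positivity), Real.log_mul h2' (ne_of_gt hna)]
  have e3 : Real.log ((2 * a) * (2 * ((n:ℝ) - a)) / ((n:ℝ) * (n:ℝ))) =
      (Real.log 2 + Real.log a) + (Real.log 2 + Real.log ((n:ℝ) - a)) -
        (Real.log (n:ℝ) + Real.log (n:ℝ)) := by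
    rw [Real.log_div (by positivity) (by positivity),
      Real.log_mul (by positivity) (by positivity),
      Real.log_mul h2' (ne_of_gt hapos), Real.log_mul h2' (ne_of_gt hna),
      Real.log_mul (ne_of_gt hnpos) (ne_of_gt hnpos)]
  have hlog : Real.log ((2 * a) * (2 * ((n:ℝ) - a)) / ((n:ℝ) * (n:ℝ))) ≤
      (2 * a) * (2 * ((n:ℝ) - a)) / ((n:ℝ) * (n:ℝ)) - 1 :=
    Real.log_le_sub_one_of_pos (by positivity)
  have hkey : (2 * a) * (2 * ((n:ℝ) - a)) / ((n:ℝ) * (n:ℝ)) - 1 =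
      -((2 * a - (n:ℝ)) ^ 2 / ((n:ℝ) * (n:ℝ))) := by
    field_simp
    ring
  rw [hkey, e3] at hlog
  -- combine
  have hmain : (n:ℝ) * Real.log ((n:ℝ) / (2 * a)) +
      (n:ℝ) * Real.log ((n:ℝ) / (2 * (n:ℝ) - 2 * a)) ≥
      (n:ℝ) * ((2 * a - (n:ℝ)) ^ 2 / ((n:ℝ) * (n:ℝ))) := by
    rw [e1, e2]
    nlinarith [hlog, hnpos]
  have h6 : (n:ℝ) * ((2 * a - (n:ℝ)) ^ 2 / ((n:ℝ) * (n:ℝ))) =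
      (2 * a - (n:ℝ)) ^ 2 / (n:ℝ) := by
    field_simp
  have h7 : (2 * a - (n:ℝ)) ^ 2 / (2 * (n:ℝ)) ≤ (2 * a - (n:ℝ)) ^ 2 / (n:ℝ) :=
    div_le_div_of_nonneg_left (by positivity) hnpos (by linarith)
  calc (2 * a - (n:ℝ)) ^ 2 / (2 * (n:ℝ)) ≤ (2 * a - (n:ℝ)) ^ 2 / (n:ℝ) := h7
    _ = (n:ℝ) * ((2 * a - (n:ℝ)) ^ 2 / ((n:ℝ) * (n:ℝ))) := h6.symm
    _ ≤ (n:ℝ) * Real.log ((n:ℝ) / (2 * a)) +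
        (n:ℝ) * Real.log ((n:ℝ) / (2 * (n:ℝ) - 2 * a)) := hmain
    _ ≤ KL n := hbound
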